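/- arXiv:1204.4906 — 5 statements merged into one kernel-verified Lean document; each statement's English description precedes it below -/
import Mathlib

section
/- The equational theory T0 with three binary function symbols l, r, m and the single axiom l(x1,x2) = r(x2,x1) is rigid: for every linear-regular term t(x1,...,xn) over {l,r,m} and every permutation σ of {1,...,n}, if T0 proves t(x1,...,xn) = t(x_{σ(1)},...,x_{σ(n)}), then σ is the identity permutation. -/
/-- Terms of the theory `T0` with three binary symbols `l`, `r`, `m`,
in context `x_1, ..., x_n`. -/
inductive Tm0 : ℕ → Type
  | var {n} : Fin n → Tm0 n
  | l {n} : Tm0 n → Tm0 n → Tm0 n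
  | r {n} : Tm0 n → Tm0 n → Tm0 n
  | m {n} : Tm0 n → Tm0 n → Tm0 n

/-- Equational provability in `T0`, whose single axiom is `l(x1,x2) = r(x2,x1)`
(closed under all substitution instances and congruence). -/
inductive Prov0 : {n : ℕ} → Tm0 n → Tm0 n → Prop
  | refl {n} (t : Tm0 n) : Prov0 t t
  | symm {n} {s t : Tm0 n} : Prov0 s t → Prov0 t s
  | trans {n} {s t w : Tm0 n} : Prov0 s t → Prov0 t w → Prov0 s w
  | congl {n} {a a' b b' : Tm0 n} : Prov0 a a' → Prov0 b b' → Prov0 (.l a b) (.l a' b')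
  | congr_ {n} {a a' b b' : Tm0 n} : Prov0 a a' → Prov0 b b' → Prov0 (.r a b) (.r a' b')
  | congm {n} {a a' b b' : Tm0 n} : Prov0 a a' → Prov0 b b' → Prov0 (.m a b) (.m a' b')
  | ax {n} (a b : Tm0 n) : Prov0 (.l a b) (.r b a)

/-- The left-to-right list of variable occurrences of a term of `T0`. -/
def varList0 {n} : Tm0 n → List (Fin n)
  | .var i => [i]
  | .l a b => varList0 a ++ varList0 b
  | .r a b => varList0 a ++ varList0 b
  | .m a b => varList0 a ++ varList0 b

/-- A term in context `x_1, ..., x_n` is linear-regular if every variable occurs exactly once. -/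
def LinReg0 {n} (t : Tm0 n) : Prop := ∀ i : Fin n, (varList0 t).count i = 1

/-- Substitution of variables along a map of variables (`t(x_{σ(1)},...,x_{σ(n)})`). -/
def rename0 {n} (σ : Fin n → Fin n) : Tm0 n → Tm0 n
  | .var i => .var (σ i)
  | .l a b => .l (rename0 σ a) (rename0 σ b)
  | .r a b => .r (rename0 σ a) (rename0 σ b)
  | .m a b => .m (rename0 σ a) (rename0 σ b)

/-- Normal form: rewrite `r(a,b)` to `l(b,a)` everywhere. -/
def norm0 {n} : Tm0 n → Tm0 n
  | .var i => .var i
  | .l a b => .l (norm0 a) (norm0 b)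
  | .r a b => .l (norm0 b) (norm0 a)
  | .m a b => .m (norm0 a) (norm0 b)

lemma norm0_prov {n} {s t : Tm0 n} (h : Prov0 s t) : norm0 s = norm0 t := by
  induction h with
  | refl => rfl
  | symm _ ih => exact ih.symm
  | trans _ _ ih1 ih2 => exact ih1.trans ih2
  | congl _ _ ih1 ih2 => simp [norm0, ih1, ih2]
  | congr_ _ _ ih1 ih2 => simp [norm0, ih1, ih2]
  | congm _ _ ih1 ih2 => simp [norm0, ih1, ih2]
  | ax a b => rfl

lemma norm0_rename {n} (σ : Fin n → Fin n) (t : Tm0 n) :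
    norm0 (rename0 σ t) = rename0 σ (norm0 t) := by
  induction t with
  | var i => rfl
  | l a b iha ihb => simp [norm0, rename0, iha, ihb]
  | r a b iha ihb => simp [norm0, rename0, iha, ihb]
  | m a b iha ihb => simp [norm0, rename0, iha, ihb]

lemma varList0_rename {n} (σ : Fin n → Fin n) (t : Tm0 n) :
    varList0 (rename0 σ t) = (varList0 t).map σ := by
  induction t with
  | var i => rfl
  | l a b iha ihb => simp [varList0, rename0, iha, ihb]
  | r a b iha ihb => simp [varList0, rename0, iha, ihb]
  | m a b iha ihb => simp [varList0, rename0, iha, ihb]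

lemma varList0_norm_count {n} (t : Tm0 n) (i : Fin n) :
    (varList0 (norm0 t)).count i = (varList0 t).count i := by
  induction t with
  | var j => rfl
  | l a b iha ihb => simp [varList0, norm0, List.count_append, iha, ihb]
  | r a b iha ihb => simp [varList0, norm0, List.count_append, iha, ihb]; omega
  | m a b iha ihb => simp [varList0, norm0, List.count_append, iha, ihb]

lemma fix_of_map {n} (σ : Fin n → Fin n) :
    ∀ L : List (Fin n), L = L.map σ → ∀ i ∈ L, σ i = i := by
  intro L
  induction L with
  | nil => intro _ i hi; simp at hi
  | cons a L ih =>
    intro h i hi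
    simp only [List.map_cons, List.cons.injEq] at h
    rcases List.mem_cons.mp hi with hi | hi
    · exact hi ▸ h.1.symm
    · exact ih h.2 i hi

/-- The theory `T0` with binary symbols `l, r, m` and single axiom
`l(x1,x2) = r(x2,x1)` is rigid: any linear-regular term provably equal to a permuted
version of itself forces the permutation to be the identity. -/
theorem T0_rigid :
    ∀ (n : ℕ) (t : Tm0 n), LinReg0 t → ∀ σ : Equiv.Perm (Fin n),
      Prov0 t (rename0 σ t) → σ = 1 := by
  intro n t hlin σ h
  have hn : norm0 t = rename0 σ (norm0 t) := (norm0_prov h).trans (norm0_rename σ t)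
  have hL : varList0 (norm0 t) = (varList0 (norm0 t)).map σ := by
    conv_lhs => rw [hn]
    exact varList0_rename σ (norm0 t)
  ext i
  have hmem : i ∈ varList0 (norm0 t) := by
    have : (varList0 (norm0 t)).count i = 1 := (varList0_norm_count t i).trans (hlin i)
    exact List.count_pos_iff.mp (by omega)
  exact congrArg Fin.val (fix_of_map σ _ hL i hmem)
end

section
/- Let T be the theory with unary symbols g1,...,gn, an extra unary symbol α, and a binary symbol m, with axioms u_i(x1) = v_i(x1) for i < m and m(uα(x1), x2) = m(vα(x2), x1), where u_i, v_i, u, v are words over {g1,...,gn}. Then for any two words w1, w2 over {g1,...,gn}: the monoid presentation ⟨g1,...,gn | u_i = v_i (i < m)⟩ proves w1 = w2 if and only if T proves w1(x1) = w2(x1). -/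
/-- Terms of the theory `T`: unary symbols `g x` for each letter `x` of the alphabet `Fin N`,
an extra unary symbol `al` (written α), and a binary symbol `m`, in context `x_1, ..., x_n`. -/
inductive TmT (N : ℕ) : ℕ → Type
  | var {n} : Fin n → TmT N n
  | g {n} : Fin N → TmT N n → TmT N n
  | al {n} : TmT N n → TmT N n
  | m {n} : TmT N n → TmT N n → TmT N n

/-- A word `w` over the alphabet applied to a term as a composite of unary symbols. -/
def wApp {N n : ℕ} (w : List (Fin N)) (t : TmT N n) : TmT N n :=
  w.foldr (fun x s => TmT.g x s) t

/-- Equational provability in the theory `T` with axioms `u_i(x1) = v_i(x1)` (for `i : Fin M`,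
where `u_i = ur i`, `v_i = vr i`) and `m(uα(x1), x2) = m(vα(x2), x1)`, closed under
all substitution instances and congruence. -/
inductive ProvT {N : ℕ} (M : ℕ) (ur vr : Fin M → List (Fin N)) (u v : List (Fin N)) :
    {n : ℕ} → TmT N n → TmT N n → Prop
  | refl {n} (t : TmT N n) : ProvT M ur vr u v t t
  | symm {n} {s t : TmT N n} : ProvT M ur vr u v s t → ProvT M ur vr u v t s
  | trans {n} {s t w : TmT N n} :
      ProvT M ur vr u v s t → ProvT M ur vr u v t w → ProvT M ur vr u v s w
  | congg {n} (x : Fin N) {s t : TmT N n} :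
      ProvT M ur vr u v s t → ProvT M ur vr u v (.g x s) (.g x t)
  | congal {n} {s t : TmT N n} : ProvT M ur vr u v s t → ProvT M ur vr u v (.al s) (.al t)
  | congm {n} {a a' b b' : TmT N n} : ProvT M ur vr u v a a' → ProvT M ur vr u v b b' →
      ProvT M ur vr u v (.m a b) (.m a' b')
  | axu {n} (i : Fin M) (t : TmT N n) : ProvT M ur vr u v (wApp (ur i) t) (wApp (vr i) t)
  | axm {n} (t₁ t₂ : TmT N n) :
      ProvT M ur vr u v (.m (wApp u (.al t₁)) t₂) (.m (wApp v (.al t₂)) t₁)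

/-- Provability of word equations from the monoid presentation
`⟨ Fin N | ur i = vr i (i : Fin M) ⟩`: the congruence on the free monoid of words
over `Fin N` generated by the relations. -/
inductive MonProv {N M : ℕ} (ur vr : Fin M → List (Fin N)) :
    List (Fin N) → List (Fin N) → Prop
  | of (i : Fin M) : MonProv ur vr (ur i) (vr i)
  | refl (w : List (Fin N)) : MonProv ur vr w w
  | symm {a b} : MonProv ur vr a b → MonProv ur vr b a
  | trans {a b c} : MonProv ur vr a b → MonProv ur vr b c → MonProv ur vr a c
  | mul {a b c d} : MonProv ur vr a b → MonProv ur vr c d → MonProv ur vr (a ++ c) (b ++ d)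

namespace MonThyAux

variable {N M : ℕ} (ur vr : Fin M → List (Fin N)) (u v : List (Fin N))

/-- Congruence of `ProvT` under `wApp`. -/
theorem wcong {n : ℕ} (w : List (Fin N)) {s t : TmT N n}
    (h : ProvT M ur vr u v s t) : ProvT M ur vr u v (wApp w s) (wApp w t) := by
  induction w with
  | nil => exact h
  | cons x w ih => exact ProvT.congg x ih

theorem wApp_append {n : ℕ} (a b : List (Fin N)) (t : TmT N n) :
    wApp (a ++ b) t = wApp a (wApp b t) := by
  simp [wApp, List.foldr_append]

/-- Forward direction: monoid provability gives theory provability on any term. -/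
theorem monToT {a b : List (Fin N)} (h : MonProv ur vr a b) {n : ℕ} (t : TmT N n) :
    ProvT M ur vr u v (wApp a t) (wApp b t) := by
  induction h generalizing t with
  | of i => exact ProvT.axu i t
  | refl w => exact ProvT.refl _
  | symm _ ih => exact ProvT.symm (ih t)
  | trans _ _ ih₁ ih₂ => exact ProvT.trans (ih₁ t) (ih₂ t)
  | @mul a b c d _ _ ih₁ ih₂ =>
    rw [wApp_append, wApp_append]
    exact ProvT.trans (ih₁ (wApp c t)) (wcong ur vr u v b (ih₂ t))

/-- The quotient of the free monoid by the generated congruence. -/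
def msetoid : Setoid (List (Fin N)) :=
  ⟨MonProv ur vr, ⟨MonProv.refl, MonProv.symm, MonProv.trans⟩⟩

abbrev Q := Quotient (msetoid ur vr)

def gQ (x : Fin N) : Q ur vr → Q ur vr :=
  Quotient.map (fun l => x :: l) (fun a b h => by
    exact MonProv.mul (MonProv.refl [x]) h)

/-- Evaluation of terms in the model: `g` acts by prepending, `al` and `m` are constant. -/
def eval : {n : ℕ} → TmT N n → (Fin n → Q ur vr) → Q ur vr
  | _, .var i, ρ => ρ i
  | _, .g x t, ρ => gQ ur vr x (eval t ρ)
  | _, .al _, _ => Quotient.mk (msetoid ur vr) []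
  | _, .m _ _, _ => Quotient.mk (msetoid ur vr) []

theorem eval_wApp {n : ℕ} (w : List (Fin N)) (t : TmT N n) (ρ : Fin n → Q ur vr) :
    eval ur vr (wApp w t) ρ = w.foldr (gQ ur vr) (eval ur vr t ρ) := by
  induction w with
  | nil => rfl
  | cons x w ih =>
    have : wApp (x :: w) t = TmT.g x (wApp w t) := rfl
    rw [this, List.foldr_cons, ← ih, eval]

theorem foldr_gQ_mk (w l : List (Fin N)) :
    w.foldr (gQ ur vr) (Quotient.mk (msetoid ur vr) l) =
      Quotient.mk (msetoid ur vr) (w ++ l) := by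
  induction w with
  | nil => rfl
  | cons x w ih => rw [List.foldr_cons, ih]; rfl

/-- Soundness of `ProvT` in the model. -/
theorem sound {n : ℕ} {s t : TmT N n} (h : ProvT M ur vr u v s t) (ρ : Fin n → Q ur vr) :
    eval ur vr s ρ = eval ur vr t ρ := by
  induction h with
  | refl t => rfl
  | symm _ ih => exact ih.symm
  | trans _ _ ih₁ ih₂ => exact ih₁.trans ih₂
  | congg x _ ih => simp only [eval, ih]
  | congal _ _ => simp only [eval]
  | congm _ _ _ _ => simp only [eval]
  | axu i t =>
    rw [eval_wApp, eval_wApp]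
    obtain ⟨l, hl⟩ := Quotient.exists_rep (eval ur vr t ρ)
    rw [← hl, foldr_gQ_mk, foldr_gQ_mk]
    exact Quotient.sound (MonProv.mul (MonProv.of i) (MonProv.refl l))
  | axm t₁ t₂ => simp only [eval]

end MonThyAux


/-- For any two words `w₁, w₂` over the alphabet `G = Fin N`:
the monoid presentation `⟨G | ur i = vr i (i : Fin M)⟩` proves `w₁ = w₂` iff the
theory `T` proves `w₁(x1) = w₂(x1)`. -/

theorem monoid_iff_theory {N M : ℕ} (ur vr : Fin M → List (Fin N)) (u v : List (Fin N))
    (w₁ w₂ : List (Fin N)) :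
    MonProv ur vr w₁ w₂ ↔
      ProvT M ur vr u v (wApp w₁ (TmT.var (0 : Fin 1))) (wApp w₂ (TmT.var 0)) := by
  constructor
  · intro h
    exact MonThyAux.monToT ur vr u v h _
  · intro h
    have h2 := MonThyAux.sound ur vr u v h (fun _ => Quotient.mk (MonThyAux.msetoid ur vr) [])
    rw [MonThyAux.eval_wApp, MonThyAux.eval_wApp] at h2
    have hv : MonThyAux.eval ur vr (TmT.var (0 : Fin 1))
        (fun _ => Quotient.mk (MonThyAux.msetoid ur vr) []) =
        Quotient.mk (MonThyAux.msetoid ur vr) [] := by simp only [MonThyAux.eval]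
    rw [hv, MonThyAux.foldr_gQ_mk, MonThyAux.foldr_gQ_mk] at h2
    have h3 : MonProv ur vr (w₁ ++ []) (w₂ ++ []) := Quotient.exact h2
    simpa using h3
end

section
/- In the theory T, no derivation changes the number of occurrences of the binary symbol m in a term: if T proves t = t', then t and t' contain the same number of occurrences of m. Moreover, every single rewrite step in a derivation over T either involves only unary symbols or is performed on a subterm whose root symbol is m. -/
/-- The number of occurrences of the binary symbol `m` in a term. -/
def countM {N n : ℕ} : TmT N n → ℕ
  | .var _ => 0
  | .g _ t => countM t
  | .al t => countM t
  | .m a b => countM a + countM b + 1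

/-- A redex step: the replacement of a substitution instance of one side of an axiom of
`T` by the corresponding instance of the other side (at the root). -/
inductive Redex {N : ℕ} (M : ℕ) (ur vr : Fin M → List (Fin N)) (u v : List (Fin N)) :
    {n : ℕ} → TmT N n → TmT N n → Prop
  | axu {n} (i : Fin M) (t : TmT N n) : Redex M ur vr u v (wApp (ur i) t) (wApp (vr i) t)
  | axu' {n} (i : Fin M) (t : TmT N n) : Redex M ur vr u v (wApp (vr i) t) (wApp (ur i) t)
  | axm {n} (t₁ t₂ : TmT N n) :
      Redex M ur vr u v (.m (wApp u (.al t₁)) t₂) (.m (wApp v (.al t₂)) t₁)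
  | axm' {n} (t₁ t₂ : TmT N n) :
      Redex M ur vr u v (.m (wApp v (.al t₂)) t₁) (.m (wApp u (.al t₁)) t₂)

/-- A single rewrite step over `T`: a redex applied at some position of a term. -/
inductive Step {N : ℕ} (M : ℕ) (ur vr : Fin M → List (Fin N)) (u v : List (Fin N)) :
    {n : ℕ} → TmT N n → TmT N n → Prop
  | redex {n} {t t' : TmT N n} : Redex M ur vr u v t t' → Step M ur vr u v t t'
  | underG {n} (x : Fin N) {t t' : TmT N n} :
      Step M ur vr u v t t' → Step M ur vr u v (.g x t) (.g x t')
  | underAl {n} {t t' : TmT N n} :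
      Step M ur vr u v t t' → Step M ur vr u v (.al t) (.al t')
  | left {n} {t t' s : TmT N n} :
      Step M ur vr u v t t' → Step M ur vr u v (.m t s) (.m t' s)
  | right {n} {t s s' : TmT N n} :
      Step M ur vr u v s s' → Step M ur vr u v (.m t s) (.m t s')


lemma countM_wApp {N n : ℕ} (w : List (Fin N)) (t : TmT N n) :
    countM (wApp w t) = countM t := by
  induction w with
  | nil => rfl
  | cons x xs ih => simpa [wApp, countM] using ih

/-- No derivation in `T` changes the number of occurrences of `m`, and
every single redex either concerns only unary symbols (it rewrites a word of unary
symbols applied to an unchanged subterm) or is performed on a subterm whose root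
symbol is `m`. -/
theorem m_count_invariant {N M : ℕ} (ur vr : Fin M → List (Fin N)) (u v : List (Fin N)) :
    (∀ (n : ℕ) (t t' : TmT N n), ProvT M ur vr u v t t' → countM t = countM t') ∧
    (∀ (n : ℕ) (t t' : TmT N n), Redex M ur vr u v t t' →
      (∃ (i : Fin M) (s : TmT N n),
          (t = wApp (ur i) s ∧ t' = wApp (vr i) s) ∨ (t = wApp (vr i) s ∧ t' = wApp (ur i) s)) ∨
      ((∃ a b, t = TmT.m a b) ∧ (∃ a b, t' = TmT.m a b))) := by
  constructor
  · intro n t t' h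
    induction h with
    | refl t => rfl
    | symm _ ih => exact ih.symm
    | trans _ _ ih1 ih2 => exact ih1.trans ih2
    | congg x _ ih => simpa [countM] using ih
    | congal _ ih => simpa [countM] using ih
    | congm _ _ ih1 ih2 => simp [countM, ih1, ih2]
    | axu i t => simp [countM_wApp]
    | axm t₁ t₂ => simp [countM, countM_wApp]; ring
  · intro n t t' h
    cases h with
    | axu i s => exact Or.inl ⟨i, s, Or.inl ⟨rfl, rfl⟩⟩
    | axu' i s => exact Or.inl ⟨i, s, Or.inr ⟨rfl, rfl⟩⟩
    | axm t₁ t₂ => exact Or.inr ⟨⟨_, _, rfl⟩, ⟨_, _, rfl⟩⟩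
    | axm' t₁ t₂ => exact Or.inr ⟨⟨_, _, rfl⟩, ⟨_, _, rfl⟩⟩
end

section
/- If T proves u(x) = v(x), then the interpretation I : T0 → T is not conservative: T proves Ī(l(x1,x2)) = Ī(r(x1,x2)) while T0 does not prove l(x1,x2) = r(x1,x2). -/
/-- The extension `Ī` to all terms of the interpretation `I : T0 → T` given by
`l ↦ m(uα(x1),x2)`, `r ↦ m(vα(x1),x2)`, `m ↦ m(x1,x2)`. -/
def ITerm {N : ℕ} (u v : List (Fin N)) : {n : ℕ} → Tm0 n → TmT N n
  | _, .var i => .var i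
  | _, .l a b => .m (wApp u (.al (ITerm u v a))) (ITerm u v b)
  | _, .r a b => .m (wApp v (.al (ITerm u v a))) (ITerm u v b)
  | _, .m a b => .m (ITerm u v a) (ITerm u v b)


def substT {N n n' : ℕ} (σ : Fin n → TmT N n') : TmT N n → TmT N n'
  | .var i => σ i
  | .g x t => .g x (substT σ t)
  | .al t => .al (substT σ t)
  | .m a b => .m (substT σ a) (substT σ b)

theorem substT_wApp {N n n' : ℕ} (σ : Fin n → TmT N n') (w : List (Fin N)) (t : TmT N n) :
    substT σ (wApp w t) = wApp w (substT σ t) := by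
  induction w with
  | nil => rfl
  | cons x xs ih => simp [wApp, substT] at *; exact ih

theorem ProvT_subst {N M n n' : ℕ} {ur vr : Fin M → List (Fin N)} {u v : List (Fin N)}
    (σ : Fin n → TmT N n') {s t : TmT N n} (h : ProvT M ur vr u v s t) :
    ProvT M ur vr u v (substT σ s) (substT σ t) := by
  induction h with
  | refl t => exact .refl _
  | symm _ ih => exact .symm ih
  | trans _ _ ih1 ih2 => exact .trans ih1 ih2
  | congg x _ ih => exact .congg x ih
  | congal _ ih => exact .congal ih
  | congm _ _ ih1 ih2 => exact .congm ih1 ih2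
  | axu i t => rw [substT_wApp, substT_wApp]; exact .axu i _
  | axm t₁ t₂ =>
      show ProvT M ur vr u v (.m (substT σ (wApp u (.al t₁))) _) (.m (substT σ (wApp v (.al t₂))) _)
      rw [substT_wApp, substT_wApp]; exact .axm _ _

def eval0 {n : ℕ} : Tm0 n → List (Fin n)
  | .var i => [i]
  | .l a b => eval0 a ++ eval0 b
  | .r a b => eval0 b ++ eval0 a
  | .m a b => eval0 a ++ eval0 b

theorem Prov0_eval {n : ℕ} {s t : Tm0 n} (h : Prov0 s t) : eval0 s = eval0 t := by
  induction h with
  | refl t => rfl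
  | symm _ ih => exact ih.symm
  | trans _ _ ih1 ih2 => exact ih1.trans ih2
  | congl _ _ ih1 ih2 => simp [eval0, ih1, ih2]
  | congr_ _ _ ih1 ih2 => simp [eval0, ih1, ih2]
  | congm _ _ ih1 ih2 => simp [eval0, ih1, ih2]
  | ax a b => rfl

/-- If `T ⊢ u(x) = v(x)` then the interpretation `I : T0 → T` is not
conservative: `T ⊢ Ī(l(x1,x2)) = Ī(r(x1,x2))` while `T0 ⊬ l(x1,x2) = r(x1,x2)`. -/
theorem I_not_conservative {N M : ℕ} (ur vr : Fin M → List (Fin N)) (u v : List (Fin N))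
    (h : ProvT M ur vr u v (wApp u (TmT.var (0 : Fin 1))) (wApp v (TmT.var 0))) :
    ProvT M ur vr u v
      (ITerm u v (Tm0.l (Tm0.var (0 : Fin 2)) (Tm0.var 1)))
      (ITerm u v (Tm0.r (Tm0.var (0 : Fin 2)) (Tm0.var 1))) ∧
    ¬ Prov0 (Tm0.l (Tm0.var (0 : Fin 2)) (Tm0.var 1)) (Tm0.r (Tm0.var (0 : Fin 2)) (Tm0.var 1)) := by
  constructor
  · have h2 := ProvT_subst (fun _ => TmT.al (TmT.var (0 : Fin 2))) h
    rw [substT_wApp, substT_wApp] at h2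
    simp only [substT] at h2
    simpa [ITerm] using ProvT.congm h2 (.refl (TmT.var 1))
  · intro hp
    have := Prov0_eval hp
    simp [eval0] at this
end

section
/- In the theory T, if T ⊢ w(m(t1,t2)) = w'(m(t'1,t'2)) where w, w' are (possibly empty) sequences of unary symbols and m(t1,t2), m(t'1,t'2) are the outermost subterms rooted at m, then T ⊢ m(t1,t2) = m(t'1,t'2). -/
/-- A (possibly empty) sequence of unary symbols of `T` (letters of `G` or `α`)
applied to a term. -/
def uApp {N n : ℕ} (w : List (Fin N ⊕ Unit)) (t : TmT N n) : TmT N n :=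
  w.foldr (fun x s => match x with | .inl a => TmT.g a s | .inr _ => TmT.al s) t

/-- Strip all leading unary symbols from a term. -/
def strip {N n : ℕ} : TmT N n → TmT N n
  | .g _ t => strip t
  | .al t => strip t
  | t => t

@[simp] lemma strip_g {N n : ℕ} (x : Fin N) (t : TmT N n) : strip (TmT.g x t) = strip t := rfl
@[simp] lemma strip_al {N n : ℕ} (t : TmT N n) : strip (TmT.al t) = strip t := rfl
@[simp] lemma strip_m {N n : ℕ} (a b : TmT N n) : strip (TmT.m a b) = TmT.m a b := rfl

lemma strip_wApp {N n : ℕ} (w : List (Fin N)) (t : TmT N n) :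
    strip (wApp w t) = strip t := by
  induction w with
  | nil => rfl
  | cons x w ih => simpa [wApp] using ih

lemma strip_uApp {N n : ℕ} (w : List (Fin N ⊕ Unit)) (t : TmT N n) :
    strip (uApp w t) = strip t := by
  induction w with
  | nil => rfl
  | cons x w ih => cases x <;> simpa [uApp] using ih

lemma provT_strip {N M : ℕ} {ur vr : Fin M → List (Fin N)} {u v : List (Fin N)}
    {n : ℕ} {s t : TmT N n} (h : ProvT M ur vr u v s t) :
    ProvT M ur vr u v (strip s) (strip t) := by
  induction h with
  | refl t => exact .refl _
  | symm _ ih => exact ih.symm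
  | trans _ _ ih₁ ih₂ => exact ih₁.trans ih₂
  | congg x _ ih => simpa using ih
  | congal _ ih => simpa using ih
  | congm h₁ h₂ _ _ => exact (ProvT.congm h₁ h₂)
  | axu i t => rw [strip_wApp, strip_wApp]; exact .refl _
  | axm t₁ t₂ => exact .axm t₁ t₂

/-- In `T`, if `T ⊢ w(m(t₁,t₂)) = w'(m(t₁',t₂'))` for sequences
`w, w'` of unary symbols, then `T ⊢ m(t₁,t₂) = m(t₁',t₂')`. -/
theorem cancel_unary_prefix {N M : ℕ} (ur vr : Fin M → List (Fin N)) (u v : List (Fin N))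
    (n : ℕ) (w w' : List (Fin N ⊕ Unit)) (t₁ t₂ t₁' t₂' : TmT N n)
    (h : ProvT M ur vr u v (uApp w (TmT.m t₁ t₂)) (uApp w' (TmT.m t₁' t₂'))) :
    ProvT M ur vr u v (TmT.m t₁ t₂) (TmT.m t₁' t₂') := by
  have := provT_strip h
  rwa [strip_uApp, strip_uApp, strip_m, strip_m] at this
end
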